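/- Let p, q ∈ [1,∞] with 1/p + 1/q = 1, let F ⊆ [0,1]ⁿ be a nonempty convex compact set, α > 1, and let R : ℝⁿ → ℝ be β-strongly convex with respect to the ℓ_p norm on F for some β > 0, with R(f) ≥ 0 for all f ∈ F. Let x₀ = 0 and x₁,…,x_T ∈ [0,1]ⁿ, fix f' ∈ F with R(f') > 0, set S := Σ_{t=1}^T ‖x_t − x_{t-1}‖_q² and assume S > 0, and let the learning rate η > 0 satisfy ηα = √(β R(f') / S). For t = 1,…,T let f_t ∈ F minimize f ↦ ⟨f, Σ_{s=1}^{t-1} x_s + α x_{t-1}⟩ + R(f)/η over F and let g_t ∈ F minimize f ↦ ⟨f, Σ_{s=1}^{t} x_s⟩ + R(f)/η over F. If Σ_{t=1}^T ⟨f_t, x_t⟩ ≥ ⟨f', Σ_{t=1}^T x_t⟩, then the forward regret satisfies Σ_{t=1}^T ⟨f_t, x_t⟩ − Σ_{t=1}^T ⟨g_t, x_t⟩ ≤ (2α/(α−1)) √(R(f') · S / β). -/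

import Mathlib

open scoped BigOperators ENNReal

noncomputable section

/-- The bilinear pairing `⟨a, b⟩ = ∑ i, a i * b i` on `ℝⁿ`. -/
def ip {n : ℕ} (a b : Fin n → ℝ) : ℝ := ∑ i, a i * b i

/-- The `ℓ_p` norm on `ℝⁿ`, for `p ∈ [1, ∞]` (`‖a‖_∞ = max_i |a i|`). -/
def lpNorm {n : ℕ} (p : ℝ≥0∞) (a : Fin n → ℝ) : ℝ :=
  if p = ⊤ then ⨆ i, |a i| else (∑ i, |a i| ^ p.toReal) ^ (1 / p.toReal)

/-- `R` is `β`-strongly convex with respect to the `ℓ_p` norm on the convex set `F`. -/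
def StronglyConvexOnWrt {n : ℕ} (F : Set (Fin n → ℝ)) (β : ℝ) (p : ℝ≥0∞)
    (R : (Fin n → ℝ) → ℝ) : Prop :=
  ∀ a ∈ F, ∀ b ∈ F, ∀ l : ℝ, 0 ≤ l → l ≤ 1 →
    R (l • a + (1 - l) • b) ≤
      l * R a + (1 - l) * R b - β / 2 * l * (1 - l) * (lpNorm p (a - b)) ^ 2

lemma ip_sub_left {n : ℕ} (a b c : Fin n → ℝ) : ip (a - b) c = ip a c - ip b c := by
  simp [ip, sub_mul, Finset.sum_sub_distrib]

lemma ip_sub_right {n : ℕ} (a b c : Fin n → ℝ) : ip a (b - c) = ip a b - ip a c := by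
  simp [ip, mul_sub, Finset.sum_sub_distrib]

lemma ip_smul_right {n : ℕ} (r : ℝ) (a b : Fin n → ℝ) : ip a (r • b) = r * ip a b := by
  rw [ip, ip, Finset.mul_sum]
  exact Finset.sum_congr rfl fun i _ => by simp [mul_comm, mul_assoc, mul_left_comm]

lemma ip_combo_left {n : ℕ} (l m : ℝ) (a b c : Fin n → ℝ) :
    ip (l • a + m • b) c = l * ip a c + m * ip b c := by
  simp [ip, add_mul, Finset.sum_add_distrib, Finset.mul_sum]; ring_nf

lemma lpNorm_nonneg {n : ℕ} (p : ℝ≥0∞) (a : Fin n → ℝ) : 0 ≤ lpNorm p a := by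
  unfold lpNorm
  split
  · exact Real.iSup_nonneg fun i => abs_nonneg _
  · exact Real.rpow_nonneg (Finset.sum_nonneg fun i _ => Real.rpow_nonneg (abs_nonneg _) _) _

lemma lpNorm_sub_comm {n : ℕ} (p : ℝ≥0∞) (a b : Fin n → ℝ) :
    lpNorm p (a - b) = lpNorm p (b - a) := by
  unfold lpNorm
  simp only [Pi.sub_apply, abs_sub_comm]

lemma ip_le_lpNorm {n : ℕ} {p q : ℝ≥0∞} (hp : 1 ≤ p) (hpq : 1 / p + 1 / q = 1)
    (a b : Fin n → ℝ) : ip a b ≤ lpNorm p a * lpNorm q b := by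
  have habs : ip a b ≤ ∑ i, |a i| * |b i| := by
    refine Finset.sum_le_sum fun i _ => ?_
    calc a i * b i ≤ |a i * b i| := le_abs_self _
    _ = |a i| * |b i| := abs_mul _ _
  by_cases hpt : p = ⊤
  · -- q = 1
    have hq1 : q = 1 := by
      rw [hpt] at hpq
      simp only [one_div, ENNReal.inv_top, zero_add] at hpq
      exact ENNReal.inv_eq_one.mp hpq
    have h1 : lpNorm p a = ⨆ i, |a i| := by rw [lpNorm, if_pos hpt]
    have h2 : lpNorm q b = ∑ i, |b i| := by
      rw [hq1, lpNorm, if_neg (by simp)]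
      simp [Real.rpow_one]
    rw [h1, h2]
    calc ip a b ≤ ∑ i, |a i| * |b i| := habs
    _ ≤ ∑ i, (⨆ j, |a j|) * |b i| := by
        refine Finset.sum_le_sum fun i _ => ?_
        exact mul_le_mul_of_nonneg_right
          (le_ciSup (f := fun j => |a j|) (Set.Finite.bddAbove (Set.finite_range _)) i)
          (abs_nonneg _)
    _ = (⨆ j, |a j|) * ∑ i, |b i| := by rw [Finset.mul_sum]
  · by_cases hqt : q = ⊤
    · have hp1 : p = 1 := by
        rw [hqt] at hpq
        simp only [one_div, ENNReal.inv_top, add_zero] at hpq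
        exact ENNReal.inv_eq_one.mp hpq
      have h1 : lpNorm p a = ∑ i, |a i| := by
        rw [hp1, lpNorm, if_neg (by simp)]
        simp [Real.rpow_one]
      have h2 : lpNorm q b = ⨆ i, |b i| := by rw [lpNorm, if_pos hqt]
      rw [h1, h2]
      calc ip a b ≤ ∑ i, |a i| * |b i| := habs
      _ ≤ ∑ i, |a i| * ⨆ j, |b j| := by
          refine Finset.sum_le_sum fun i _ => ?_
          exact mul_le_mul_of_nonneg_left
            (le_ciSup (f := fun j => |b j|) (Set.Finite.bddAbove (Set.finite_range _)) i)
            (abs_nonneg _)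
      _ = (∑ i, |a i|) * ⨆ j, |b j| := by rw [Finset.sum_mul]
    · -- both finite
      have hp0 : p ≠ 0 := by
        intro h; rw [h] at hp; simp at hp
      have hq0 : q ≠ 0 := by
        intro h; rw [h] at hpq; simp at hpq
      have hsum : 1 / p.toReal + 1 / q.toReal = 1 := by
        have := congrArg ENNReal.toReal hpq
        rw [ENNReal.toReal_add (by simp [hp0]) (by simp [hq0])] at this
        simpa [one_div, ENNReal.toReal_inv] using this
      have hp1 : 1 < p.toReal := by
        rcases lt_or_eq_of_le hp with h | h
        · exact (ENNReal.toReal_lt_toReal (by simp) hpt).mpr h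
        · exfalso
          rw [← h] at hpq
          have h2 : (1 : ℝ≥0∞) + q⁻¹ = 1 + 0 := by simpa [one_div] using hpq
          have h3 : (q : ℝ≥0∞)⁻¹ = 0 :=
            (ENNReal.add_right_inj (by simp)).mp h2
          exact hqt (ENNReal.inv_eq_zero.mp h3)
      have hconj : p.toReal.HolderConjugate q.toReal := by
        constructor
        · simpa [one_div] using hsum
        · linarith
        · have hq' : 0 < 1 / q.toReal := by
            have : 1 / p.toReal < 1 := by rw [div_lt_one (by linarith)]; exact hp1
            linarith
          exact one_div_pos.mp hq'
      have := Real.inner_le_Lp_mul_Lq Finset.univ a b hconj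
      rw [lpNorm, if_neg hpt, lpNorm, if_neg hqt]
      exact this

lemma strong_argmin {n : ℕ} {F : Set (Fin n → ℝ)} (hFconv : Convex ℝ F)
    {β : ℝ} (hβ : 0 < β) {p : ℝ≥0∞} {R : (Fin n → ℝ) → ℝ}
    (hRsc : StronglyConvexOnWrt F β p R) {η : ℝ} (hη : 0 < η)
    (c : Fin n → ℝ) {u v : Fin n → ℝ} (hu : u ∈ F) (hv : v ∈ F)
    (hmin : ∀ w ∈ F, ip u c + R u / η ≤ ip w c + R w / η) :
    β / 2 * (lpNorm p (v - u)) ^ 2 ≤ η * (ip v c - ip u c) + (R v - R u) := by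
  have key : ∀ l : ℝ, 0 < l → l ≤ 1 →
      β / 2 * (1 - l) * (lpNorm p (v - u)) ^ 2 ≤ η * (ip v c - ip u c) + (R v - R u) := by
    intro l hl0 hl1
    have hz : l • v + (1 - l) • u ∈ F :=
      hFconv hv hu hl0.le (by linarith) (by ring)
    have hm := hmin _ hz
    have hr := hRsc v hv u hu l hl0.le hl1
    rw [ip_combo_left] at hm
    have h1 : R u / η - R (l • v + (1 - l) • u) / η ≤ l * ip v c - l * ip u c := by
      nlinarith [hm]
    have h2 := mul_le_mul_of_nonneg_right h1 hη.le
    rw [sub_mul, div_mul_cancel₀ _ hη.ne', div_mul_cancel₀ _ hη.ne'] at h2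
    have h3 : l * (β / 2 * (1 - l) * (lpNorm p (v - u)) ^ 2) ≤
        l * (η * (ip v c - ip u c) + (R v - R u)) := by nlinarith [h2, hr]
    exact le_of_mul_le_mul_left h3 hl0
  set K : ℝ := (lpNorm p (v - u)) ^ 2 with hK
  have hK0 : 0 ≤ K := sq_nonneg _
  set A : ℝ := η * (ip v c - ip u c) + (R v - R u) with hA
  have hA0 : 0 ≤ A := by
    have := key 1 one_pos le_rfl
    simpa using this
  by_contra hcon
  push_neg at hcon
  have hKpos : 0 < K := by nlinarith
  set l : ℝ := (β / 2 * K - A) / (β * K) with hl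
  have hβK : 0 < β * K := mul_pos hβ hKpos
  have hl0 : 0 < l := div_pos (by linarith) hβK
  have hl1 : l ≤ 1 := by
    rw [div_le_one hβK]; nlinarith
  have hk := key l hl0 hl1
  have hl' : l * (β * K) = β / 2 * K - A := div_mul_cancel₀ _ hβK.ne'
  have hl2 : l * (β * K) * (β * K) = (β / 2 * K - A) * (β * K) := by rw [hl']
  nlinarith [mul_le_mul_of_nonneg_right hk hβK.le, hl2,
    mul_lt_mul_of_pos_right hcon hβK]

lemma stability {n : ℕ} {F : Set (Fin n → ℝ)} (hFconv : Convex ℝ F)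
    {β : ℝ} (hβ : 0 < β) {p : ℝ≥0∞} {R : (Fin n → ℝ) → ℝ}
    (hRsc : StronglyConvexOnWrt F β p R) {η : ℝ} (hη : 0 < η)
    {u v : Fin n → ℝ} (hu : u ∈ F) (hv : v ∈ F) (c₁ c₂ : Fin n → ℝ)
    (hmin1 : ∀ w ∈ F, ip u c₁ + R u / η ≤ ip w c₁ + R w / η)
    (hmin2 : ∀ w ∈ F, ip v c₂ + R v / η ≤ ip w c₂ + R w / η) :
    β * (lpNorm p (u - v)) ^ 2 ≤ η * ip (u - v) (c₂ - c₁) := by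
  have h1 := strong_argmin hFconv hβ hRsc hη c₁ hu hv hmin1
  have h2 := strong_argmin hFconv hβ hRsc hη c₂ hv hu hmin2
  rw [lpNorm_sub_comm] at h1
  rw [ip_sub_left, ip_sub_right, ip_sub_right]
  nlinarith [h1, h2]

/-- **Forward regret bound of AFTRL with tuned learning rate.**
With `S = ∑_{t=1}^T ‖x t - x (t-1)‖_q² > 0` and `η α = √(β R f' / S)`, if
`∑_{t=1}^T ⟨f t, x t⟩ ≥ ⟨f', ∑_{t=1}^T x t⟩` then
`∑_{t=1}^T ⟨f t, x t⟩ - ∑_{t=1}^T ⟨g t, x t⟩ ≤ (2α/(α-1)) √(R f' · S / β)`. -/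
theorem aftrl_forward_regret {n T : ℕ} (p q : ℝ≥0∞)
    (hp : 1 ≤ p) (hq : 1 ≤ q) (hpq : 1 / p + 1 / q = 1)
    (F : Set (Fin n → ℝ)) (hF : F.Nonempty) (hFsub : F ⊆ Set.Icc 0 1)
    (hFconv : Convex ℝ F) (hFcomp : IsCompact F)
    (α : ℝ) (hα : 1 < α) (β : ℝ) (hβ : 0 < β)
    (R : (Fin n → ℝ) → ℝ) (hRsc : StronglyConvexOnWrt F β p R)
    (hRnonneg : ∀ f ∈ F, 0 ≤ R f)
    (x : ℕ → (Fin n → ℝ)) (hx0 : x 0 = 0)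
    (hx : ∀ t ∈ Finset.Icc 1 T, x t ∈ Set.Icc (0 : Fin n → ℝ) 1)
    (f' : Fin n → ℝ) (hf' : f' ∈ F) (hRf' : 0 < R f')
    (S : ℝ) (hS : S = ∑ t ∈ Finset.Icc 1 T, (lpNorm q (x t - x (t - 1))) ^ 2)
    (hSpos : 0 < S)
    (η : ℝ) (hη : 0 < η) (hηα : η * α = Real.sqrt (β * R f' / S))
    (f g : ℕ → (Fin n → ℝ))
    (hf : ∀ t ∈ Finset.Icc 1 T, f t ∈ F ∧
      ∀ u ∈ F,
        ip (f t) ((∑ s ∈ Finset.Icc 1 (t - 1), x s) + α • x (t - 1)) + R (f t) / η ≤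
        ip u ((∑ s ∈ Finset.Icc 1 (t - 1), x s) + α • x (t - 1)) + R u / η)
    (hg : ∀ t ∈ Finset.Icc 1 T, g t ∈ F ∧
      ∀ u ∈ F,
        ip (g t) (∑ s ∈ Finset.Icc 1 t, x s) + R (g t) / η ≤
        ip u (∑ s ∈ Finset.Icc 1 t, x s) + R u / η)
    (hlarge : ip f' (∑ t ∈ Finset.Icc 1 T, x t) ≤ ∑ t ∈ Finset.Icc 1 T, ip (f t) (x t)) :
    (∑ t ∈ Finset.Icc 1 T, ip (f t) (x t)) - (∑ t ∈ Finset.Icc 1 T, ip (g t) (x t)) ≤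
      2 * α / (α - 1) * Real.sqrt (R f' * S / β) := by
  have hα0 : 0 < α := by linarith
  have hα1 : 0 < α - 1 := by linarith
  set C : ℝ := η * α ^ 2 / (4 * β * (α - 1)) with hC
  -- per-step bound
  have hstep : ∀ t ∈ Finset.Icc 1 T,
      ip (f t) (x t) - ip (g t) (x t) ≤ C * (lpNorm q (x t - x (t - 1))) ^ 2 := by
    intro t ht
    obtain ⟨hft, hfmin⟩ := hf t ht
    obtain ⟨hgt, hgmin⟩ := hg t ht
    have ht1 : 1 ≤ t := (Finset.mem_Icc.mp ht).1
    have hsucc : t - 1 + 1 = t := Nat.succ_pred_eq_of_pos ht1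
    have hsplit : (∑ s ∈ Finset.Icc 1 t, x s)
        = (∑ s ∈ Finset.Icc 1 (t - 1), x s) + x t := by
      conv_lhs => rw [← hsucc]
      rw [Finset.sum_Icc_succ_top (by omega)]
      rw [hsucc]
    have hstab := stability hFconv hβ hRsc hη hft hgt
      ((∑ s ∈ Finset.Icc 1 (t - 1), x s) + α • x (t - 1))
      (∑ s ∈ Finset.Icc 1 t, x s) hfmin hgmin
    have hdiff : (∑ s ∈ Finset.Icc 1 t, x s)
        - ((∑ s ∈ Finset.Icc 1 (t - 1), x s) + α • x (t - 1))
        = α • (x t - x (t - 1)) - (α - 1) • x t := by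
      rw [hsplit]; funext i
      simp only [Pi.sub_apply, Pi.add_apply, Pi.smul_apply, smul_eq_mul]
      ring
    rw [hdiff, ip_sub_right, ip_smul_right, ip_smul_right] at hstab
    -- hstab : β * lpNorm p (f t - g t) ^ 2 ≤
    --   η * (α * ip (f t - g t) (x t - x (t-1)) - (α - 1) * ip (f t - g t) (x t))
    have hhold : ip (f t - g t) (x t - x (t - 1)) ≤
        lpNorm p (f t - g t) * lpNorm q (x t - x (t - 1)) := ip_le_lpNorm hp hpq _ _
    have hN0 : 0 ≤ lpNorm p (f t - g t) := lpNorm_nonneg _ _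
    have hD0 : 0 ≤ lpNorm q (x t - x (t - 1)) := lpNorm_nonneg _ _
    rw [← ip_sub_left]
    have hmain : η * (4 * β * (α - 1) * ip (f t - g t) (x t)) ≤
        η * (η * α ^ 2 * (lpNorm q (x t - x (t - 1))) ^ 2) := by
      nlinarith [mul_le_mul_of_nonneg_left hstab (by positivity : (0:ℝ) ≤ 4 * β),
        mul_le_mul_of_nonneg_left hhold (by positivity : (0:ℝ) ≤ 4 * β * η * α),
        sq_nonneg (η * α * lpNorm q (x t - x (t - 1)) - 2 * β * lpNorm p (f t - g t))]
    have hmain' := (mul_le_mul_iff_right₀ hη).mp hmain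
    rw [hC, div_mul_eq_mul_div, le_div_iff₀ (by positivity)]
    nlinarith [hmain']
  have hsum : (∑ t ∈ Finset.Icc 1 T, ip (f t) (x t))
      - (∑ t ∈ Finset.Icc 1 T, ip (g t) (x t))
      = ∑ t ∈ Finset.Icc 1 T, (ip (f t) (x t) - ip (g t) (x t)) :=
    (Finset.sum_sub_distrib _ _).symm
  rw [hsum]
  have hsum2 : ∑ t ∈ Finset.Icc 1 T, (ip (f t) (x t) - ip (g t) (x t)) ≤ C * S := by
    calc ∑ t ∈ Finset.Icc 1 T, (ip (f t) (x t) - ip (g t) (x t))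
        ≤ ∑ t ∈ Finset.Icc 1 T, C * (lpNorm q (x t - x (t - 1))) ^ 2 :=
          Finset.sum_le_sum hstep
    _ = C * S := by rw [← Finset.mul_sum, hS]
  refine hsum2.trans ?_
  -- final arithmetic
  set r : ℝ := Real.sqrt (β * R f' / S) with hr
  set s : ℝ := Real.sqrt (R f' * S / β) with hs
  have hr2 : r ^ 2 = β * R f' / S := Real.sq_sqrt (by positivity)
  have hs2 : s ^ 2 = R f' * S / β := Real.sq_sqrt (by positivity)
  have hr0 : 0 ≤ r := Real.sqrt_nonneg _
  have hs0 : 0 ≤ s := Real.sqrt_nonneg _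
  have hrS : r * S = β * s := by
    have h1 : (r * S) ^ 2 = (β * s) ^ 2 := by
      rw [mul_pow, mul_pow, hr2, hs2]
      field_simp
    have h2 : 0 ≤ r * S := by positivity
    have h3 : 0 ≤ β * s := by positivity
    calc r * S = Real.sqrt ((r * S) ^ 2) := (Real.sqrt_sq h2).symm
    _ = Real.sqrt ((β * s) ^ 2) := by rw [h1]
    _ = β * s := Real.sqrt_sq h3
  have hη' : η = r / α := by
    field_simp
    linarith [hηα]
  have hCS : C * S = α * s / (4 * (α - 1)) := by
    have h4 : C * S = α * (r * S) / (4 * β * (α - 1)) := by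
      rw [hC, hη']
      field_simp
    rw [h4, hrS]
    field_simp
  rw [hCS]
  have hdiffpos : 2 * α / (α - 1) * s - α * s / (4 * (α - 1)) = 7 * α * s / (4 * (α - 1)) := by
    field_simp
    ring
  have h7 : 0 ≤ 7 * α * s / (4 * (α - 1)) := by positivity
  linarith
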